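/- arXiv:2007.01086 — 2 statements merged into one kernel-verified Lean document; each statement's English description precedes it below -/
import Mathlib

section
/- Let n ≥ 1, 1 ≤ k ≤ n, and 1 ≤ ℓ ≤ 2^k − 2. Then there is a bijection between the set of constructive ordered k-covers A of Fin n such that exactly ℓ of the regions B_t(A), t ∈ 𝕋(k), are nonempty, and the Cartesian product S̃(n,ℓ) × F(k,ℓ). -/
/-- `𝕋(k)`: all non-constant index vectors `t : Fin k → Bool`
(`c ↔ true`, `e ↔ false`), i.e. all vectors except the all-`e` and all-`c` ones. -/
def TT (k : ℕ) : Finset (Fin k → Bool) :=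
  Finset.univ.filter fun t => (∃ i, t i = true) ∧ (∃ i, t i = false)

/-- A constructive ordered `k`-cover of `Fin n`: the sets cover `Fin n` and no one
is contained in another. -/
def IsCCover (n k : ℕ) (A : Fin k → Finset (Fin n)) : Prop :=
  Finset.univ.biUnion A = Finset.univ ∧ ∀ i j : Fin k, i ≠ j → (A i \ A j).Nonempty

/-- The region `B_t(A) = (⋂_{i : t i = c} A i) ∩ (⋂_{i : t i = e} (A i)ᶜ)`. -/
def region {n k : ℕ} (A : Fin k → Finset (Fin n)) (t : Fin k → Bool) : Finset (Fin n) :=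
  Finset.univ.filter fun p => ∀ i, p ∈ A i ↔ t i = true

/-- A `(k,ℓ)`-labeling: `x : 𝕋(k) → Bool` such that for all `i ≠ j` there is
`t ∈ 𝕋(k)` with `t i = c`, `t j = e` and `x t = true`, and exactly `ℓ` of the
`t ∈ 𝕋(k)` are labeled `true`. -/
def IsLabeling (k ℓ : ℕ) (x : ↥(TT k) → Bool) : Prop :=
  (∀ i j : Fin k, i ≠ j →
      ∃ t : ↥(TT k), t.1 i = true ∧ t.1 j = false ∧ x t = true) ∧
  (Finset.univ.filter fun t : ↥(TT k) => x t = true).card = ℓ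

namespace CCoverAux

open Finset

variable {n k ℓ : ℕ}

lemma mem_TT {t : Fin k → Bool} : t ∈ TT k ↔ (∃ i, t i = true) ∧ (∃ i, t i = false) := by
  simp [TT]

lemma mem_region {A : Fin k → Finset (Fin n)} {t : Fin k → Bool} {p : Fin n} :
    p ∈ region A t ↔ ∀ i, p ∈ A i ↔ t i = true := by
  simp [region]

lemma region_disjoint {A : Fin k → Finset (Fin n)} {t t' : Fin k → Bool} (h : t ≠ t') :
    region A t ∩ region A t' = ∅ := by
  ext p
  simp only [mem_inter, notMem_empty, iff_false]
  rintro ⟨h1, h2⟩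
  rw [mem_region] at h1 h2
  refine h (funext fun i => ?_)
  have h3 := (h1 i).symm.trans (h2 i)
  revert h3
  cases t i <;> cases t' i <;> simp

def Sx (x : ↥(TT k) → Bool) : Finset ↥(TT k) :=
  Finset.univ.filter fun t => x t = true

noncomputable def tv (x : ↥(TT k) → Bool) (hx : (Sx x).card = ℓ) : Fin ℓ → ↥(TT k) :=
  fun j => (((Sx x).equivFinOfCardEq hx).symm j).1

lemma tv_injective (x : ↥(TT k) → Bool) (hx : (Sx x).card = ℓ) :
    Function.Injective (tv x hx) :=
  Subtype.val_injective.comp ((Sx x).equivFinOfCardEq hx).symm.injective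

lemma tv_true (x : ↥(TT k) → Bool) (hx : (Sx x).card = ℓ) (j : Fin ℓ) :
    x (tv x hx j) = true := by
  have := (((Sx x).equivFinOfCardEq hx).symm j).2
  simp only [Sx, Finset.mem_filter] at this
  exact this.2

lemma tv_surj (x : ↥(TT k) → Bool) (hx : (Sx x).card = ℓ) (t : ↥(TT k))
    (ht : x t = true) : ∃ j, tv x hx j = t := by
  refine ⟨(Sx x).equivFinOfCardEq hx ⟨t, by simp [Sx, ht]⟩, ?_⟩
  simp [tv]

lemma tv_congr {x x' : ↥(TT k) → Bool} (h : x' = x) (hx : (Sx x).card = ℓ)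
    (hx' : (Sx x').card = ℓ) : tv x' hx' = tv x hx := by
  subst h; rfl

def mkA (B : Fin ℓ → Finset (Fin n)) (tt : Fin ℓ → ↥(TT k)) : Fin k → Finset (Fin n) :=
  fun i => Finset.univ.filter fun p => (∃ j, p ∈ B j ∧ (tt j).1 i = true) ∨ ∀ j, p ∉ B j

variable {B : Fin ℓ → Finset (Fin n)} {tt : Fin ℓ → ↥(TT k)} {x : ↥(TT k) → Bool}

lemma mem_mkA_of_mem (hB2 : ∀ i j, i ≠ j → B i ∩ B j = ∅) {p : Fin n} {j0 : Fin ℓ}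
    (hp : p ∈ B j0) (i : Fin k) : p ∈ mkA B tt i ↔ (tt j0).1 i = true := by
  simp only [mkA, mem_filter, mem_univ, true_and]
  constructor
  · rintro (⟨j, hj, hji⟩ | h)
    · obtain rfl : j = j0 := by
        by_contra hne
        have hmem : p ∈ B j ∩ B j0 := mem_inter.2 ⟨hj, hp⟩
        rw [hB2 j j0 hne] at hmem
        exact absurd hmem (notMem_empty p)
      exact hji
    · exact absurd hp (h j0)
  · exact fun h => Or.inl ⟨j0, hp, h⟩

lemma mem_mkA_of_not_mem {p : Fin n} (h : ∀ j, p ∉ B j) (i : Fin k) : p ∈ mkA B tt i := by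
  simp only [mkA, mem_filter, mem_univ, true_and]
  exact Or.inr h

lemma type_eq_of_mem (hB2 : ∀ i j, i ≠ j → B i ∩ B j = ∅) {p : Fin n} {j0 : Fin ℓ}
    {t : Fin k → Bool} (hp : p ∈ B j0) (h : ∀ i, p ∈ mkA B tt i ↔ t i = true) :
    (tt j0).1 = t := by
  funext i
  have h3 := (mem_mkA_of_mem hB2 hp i).symm.trans (h i)
  revert h3
  cases (tt j0).1 i <;> cases t i <;> simp

lemma region_mkA_eq (hB2 : ∀ i j, i ≠ j → B i ∩ B j = ∅)
    (htt_inj : Function.Injective tt) (j : Fin ℓ) :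
    region (mkA B tt) ((tt j).1) = B j := by
  ext p
  rw [mem_region]
  constructor
  · intro h
    obtain ⟨⟨i0, hi0⟩, ⟨i1, hi1⟩⟩ := mem_TT.mp (tt j).2
    have hA0 : p ∈ mkA B tt i0 := (h i0).mpr hi0
    simp only [mkA, mem_filter, mem_univ, true_and] at hA0
    rcases hA0 with ⟨j', hj', -⟩ | hall
    · obtain rfl : j' = j := htt_inj (Subtype.ext (type_eq_of_mem hB2 hj' h))
      exact hj'
    · have := (h i1).mp (mem_mkA_of_not_mem hall i1)
      rw [hi1] at this
      exact absurd this (by simp)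
  · intro hp i
    exact mem_mkA_of_mem hB2 hp i

lemma region_mkA_empty (hB2 : ∀ i j, i ≠ j → B i ∩ B j = ∅)
    (htt_mem : ∀ j, x (tt j) = true) {t : Fin k → Bool} (ht : t ∈ TT k)
    (hxt : x ⟨t, ht⟩ = false) : region (mkA B tt) t = ∅ := by
  ext p
  simp only [notMem_empty, iff_false]
  intro hp
  rw [mem_region] at hp
  obtain ⟨⟨i0, hi0⟩, ⟨i1, hi1⟩⟩ := mem_TT.mp ht
  have hA0 : p ∈ mkA B tt i0 := (hp i0).mpr hi0
  simp only [mkA, mem_filter, mem_univ, true_and] at hA0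
  rcases hA0 with ⟨j', hj', -⟩ | hall
  · have heq : tt j' = ⟨t, ht⟩ := Subtype.ext (type_eq_of_mem hB2 hj' hp)
    have := htt_mem j'
    rw [heq, hxt] at this
    exact absurd this (by simp)
  · have := (hp i1).mp (mem_mkA_of_not_mem hall i1)
    rw [hi1] at this
    exact absurd this (by simp)

lemma mkA_cover (hk1 : 1 ≤ k) (hB1 : ∀ j, (B j).Nonempty)
    (hB2 : ∀ i j, i ≠ j → B i ∩ B j = ∅)
    (htt_surj : ∀ t, x t = true → ∃ j, tt j = t)
    (hxa : ∀ i j : Fin k, i ≠ j →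
      ∃ t : ↥(TT k), t.1 i = true ∧ t.1 j = false ∧ x t = true) :
    IsCCover n k (mkA B tt) := by
  constructor
  · ext p
    simp only [mem_biUnion, mem_univ, iff_true, true_and]
    by_cases hp : ∃ j, p ∈ B j
    · obtain ⟨j, hj⟩ := hp
      obtain ⟨⟨i0, hi0⟩, -⟩ := mem_TT.mp (tt j).2
      exact ⟨i0, (mem_mkA_of_mem hB2 hj i0).mpr hi0⟩
    · push_neg at hp
      exact ⟨⟨0, hk1⟩, mem_mkA_of_not_mem hp _⟩
  · intro i j hij
    obtain ⟨t, hti, htj, hxt⟩ := hxa i j hij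
    obtain ⟨j0, rfl⟩ := htt_surj t hxt
    obtain ⟨p, hp⟩ := hB1 j0
    refine ⟨p, mem_sdiff.2 ⟨(mem_mkA_of_mem hB2 hp i).mpr hti, fun hpj => ?_⟩⟩
    have := (mem_mkA_of_mem hB2 hp j).mp hpj
    rw [htj] at this
    exact absurd this (by simp)

lemma mkA_filter_eq (hB1 : ∀ j, (B j).Nonempty)
    (hB2 : ∀ i j, i ≠ j → B i ∩ B j = ∅)
    (htt_mem : ∀ j, x (tt j) = true)
    (htt_inj : Function.Injective tt)
    (htt_surj : ∀ t, x t = true → ∃ j, tt j = t) :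
    ((TT k).filter fun t => (region (mkA B tt) t).Nonempty)
      = Finset.image (fun j => (tt j).1) Finset.univ := by
  ext t
  simp only [mem_filter, mem_image, mem_univ, true_and]
  constructor
  · rintro ⟨ht, hne⟩
    by_cases hxt : x ⟨t, ht⟩ = true
    · obtain ⟨j, hj⟩ := htt_surj _ hxt
      exact ⟨j, congrArg Subtype.val hj⟩
    · rw [region_mkA_empty hB2 htt_mem ht (by simpa using hxt)] at hne
      exact absurd hne (by simp)
  · rintro ⟨j, rfl⟩
    refine ⟨(tt j).2, ?_⟩
    rw [region_mkA_eq hB2 htt_inj j]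
    exact hB1 j

lemma mkA_card (hB1 : ∀ j, (B j).Nonempty)
    (hB2 : ∀ i j, i ≠ j → B i ∩ B j = ∅)
    (htt_mem : ∀ j, x (tt j) = true)
    (htt_inj : Function.Injective tt)
    (htt_surj : ∀ t, x t = true → ∃ j, tt j = t) :
    ((TT k).filter fun t => (region (mkA B tt) t).Nonempty).card = ℓ := by
  have hinj : Function.Injective (fun j => (tt j).1 : Fin ℓ → Fin k → Bool) :=
    fun a b h => htt_inj (Subtype.ext h)
  rw [mkA_filter_eq hB1 hB2 htt_mem htt_inj htt_surj,
    Finset.card_image_of_injective _ hinj, Finset.card_univ, Fintype.card_fin]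

def xA (A : Fin k → Finset (Fin n)) : ↥(TT k) → Bool := fun t =>
  decide (region A t.1).Nonempty

lemma card_filter_subtype (P : (Fin k → Bool) → Prop) [DecidablePred P] :
    (Finset.univ.filter fun t : ↥(TT k) => P t.1).card = ((TT k).filter P).card := by
  refine Finset.card_bij (fun t _ => t.1) ?_ ?_ ?_
  · intro t ht
    simp only [mem_filter, mem_univ, true_and] at ht
    exact mem_filter.2 ⟨t.2, ht⟩
  · intro a _ b _ h
    exact Subtype.ext h
  · intro t ht
    simp only [mem_filter] at ht
    exact ⟨⟨t, ht.1⟩, by simp [ht.2], rfl⟩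

lemma card_Sx_xA (A : Fin k → Finset (Fin n))
    (hcard : ((TT k).filter fun t => (region A t).Nonempty).card = ℓ) :
    (Sx (xA A)).card = ℓ := by
  have : Sx (xA A) = Finset.univ.filter fun t : ↥(TT k) => (region A t.1).Nonempty := by
    simp [Sx, xA]
  rw [this]
  exact (card_filter_subtype fun s => (region A s).Nonempty).trans hcard

lemma xA_labeling {A : Fin k → Finset (Fin n)} (hA : IsCCover n k A)
    (hcard : ((TT k).filter fun t => (region A t).Nonempty).card = ℓ) :
    IsLabeling k ℓ (xA A) := by
  refine ⟨?_, card_Sx_xA A hcard⟩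
  intro i j hij
  obtain ⟨p, hp⟩ := hA.2 i j hij
  rw [mem_sdiff] at hp
  have htTT : (fun m => decide (p ∈ A m)) ∈ TT k :=
    mem_TT.mpr ⟨⟨i, by simp [hp.1]⟩, ⟨j, by simp [hp.2]⟩⟩
  refine ⟨⟨fun m => decide (p ∈ A m), htTT⟩, by simp [hp.1], by simp [hp.2], ?_⟩
  simp only [xA, decide_eq_true_eq]
  exact ⟨p, mem_region.mpr fun m => by simp⟩

lemma mkA_regions_eq {A : Fin k → Finset (Fin n)} (hA : IsCCover n k A)
    {tt : Fin ℓ → ↥(TT k)}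
    (htt_surj : ∀ t, xA A t = true → ∃ j, tt j = t) :
    mkA (fun j => region A ((tt j).1)) tt = A := by
  funext i
  ext p
  simp only [mkA, mem_filter, mem_univ, true_and]
  by_cases hcov : ∀ m, p ∈ A m
  · constructor
    · intro _; exact hcov i
    · intro _
      right
      intro j hpj
      rw [mem_region] at hpj
      obtain ⟨-, ⟨i1, hi1⟩⟩ := mem_TT.mp (tt j).2
      have := (hpj i1).mp (hcov i1)
      rw [hi1] at this
      exact absurd this (by simp)
  · have hex : ∃ m, p ∈ A m := by
      have hp : p ∈ Finset.univ.biUnion A := by rw [hA.1]; exact mem_univ p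
      simpa using hp
    push_neg at hcov
    have htTT : (fun m => decide (p ∈ A m)) ∈ TT k :=
      mem_TT.mpr ⟨hex.imp fun m hm => by simp [hm], hcov.imp fun m hm => by simp [hm]⟩
    have hpt : p ∈ region A (fun m => decide (p ∈ A m)) :=
      mem_region.mpr fun m => by simp
    have hx : xA A ⟨fun m => decide (p ∈ A m), htTT⟩ = true := by
      simp only [xA, decide_eq_true_eq]
      exact ⟨p, hpt⟩
    obtain ⟨j0, hj0⟩ := htt_surj _ hx
    have hj0v : (tt j0).1 = fun m => decide (p ∈ A m) := congrArg Subtype.val hj0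
    constructor
    · rintro (⟨j, hj, hji⟩ | h)
      · rw [mem_region] at hj
        exact (hj i).mpr hji
      · exact absurd (by rw [hj0v]; exact hpt) (h j0)
    · intro hpi
      refine Or.inl ⟨j0, by rw [hj0v]; exact hpt, ?_⟩
      rw [hj0v]
      simp [hpi]

lemma xA_mkA (hB1 : ∀ j, (B j).Nonempty)
    (hB2 : ∀ i j, i ≠ j → B i ∩ B j = ∅)
    (htt_inj : Function.Injective tt)
    (htt_mem : ∀ j, x (tt j) = true)
    (htt_surj : ∀ t, x t = true → ∃ j, tt j = t) :
    xA (mkA B tt) = x := by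
  funext t
  by_cases hxt : x t = true
  · obtain ⟨j, rfl⟩ := htt_surj t hxt
    simp only [xA, decide_eq_true_eq, hxt]
    rw [show ((tt j : ↥(TT k)) : Fin k → Bool) = (tt j).1 from rfl,
      region_mkA_eq hB2 htt_inj j]
    simp [hB1 j]
  · have hxf : x t = false := by simpa using hxt
    have hre : region (mkA B tt) t.1 = ∅ :=
      region_mkA_empty hB2 htt_mem t.2 hxf
    simp [xA, hre, hxf]

end CCoverAux
namespace CCoverAux

open Finset

variable (n k ℓ : ℕ)

noncomputable def fwd
    (a : {A : Fin k → Finset (Fin n) // IsCCover n k A ∧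
        ((TT k).filter fun t => (region A t).Nonempty).card = ℓ}) :
    ({B : Fin ℓ → Finset (Fin n) //
        (∀ i, (B i).Nonempty) ∧ ∀ i j, i ≠ j → B i ∩ B j = ∅} ×
      {x : ↥(TT k) → Bool // IsLabeling k ℓ x}) :=
  (⟨fun j => region a.1 ((tv (xA a.1) (xA_labeling a.2.1 a.2.2).2 j).1),
    fun j => of_decide_eq_true (tv_true (xA a.1) (xA_labeling a.2.1 a.2.2).2 j),
    fun i j hij => region_disjoint fun h =>
      hij (tv_injective (xA a.1) (xA_labeling a.2.1 a.2.2).2 (Subtype.ext h))⟩,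
   ⟨xA a.1, xA_labeling a.2.1 a.2.2⟩)

noncomputable def bwd (hk1 : 1 ≤ k)
    (b : ({B : Fin ℓ → Finset (Fin n) //
        (∀ i, (B i).Nonempty) ∧ ∀ i j, i ≠ j → B i ∩ B j = ∅} ×
      {x : ↥(TT k) → Bool // IsLabeling k ℓ x})) :
    {A : Fin k → Finset (Fin n) // IsCCover n k A ∧
        ((TT k).filter fun t => (region A t).Nonempty).card = ℓ} :=
  ⟨mkA b.1.1 (tv b.2.1 b.2.2.2),
   mkA_cover hk1 b.1.2.1 b.1.2.2 (tv_surj b.2.1 b.2.2.2) b.2.2.1,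
   mkA_card b.1.2.1 b.1.2.2 (tv_true b.2.1 b.2.2.2) (tv_injective b.2.1 b.2.2.2)
     (tv_surj b.2.1 b.2.2.2)⟩

end CCoverAux


/-- There is a bijection between the constructive ordered `k`-covers of `Fin n` with
exactly `ℓ` nonempty regions `B_t(A)`, `t ∈ 𝕋(k)`, and `S̃(n,ℓ) × F(k,ℓ)`. -/
theorem ccover_equiv_partitions_prod_labelings (n k ℓ : ℕ)
    (hn : 1 ≤ n) (hk1 : 1 ≤ k) (hkn : k ≤ n) (hℓ1 : 1 ≤ ℓ) (hℓ2 : ℓ ≤ 2 ^ k - 2) :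
    Nonempty (
      {A : Fin k → Finset (Fin n) // IsCCover n k A ∧
          ((TT k).filter fun t => (region A t).Nonempty).card = ℓ} ≃
      ({B : Fin ℓ → Finset (Fin n) //
          (∀ i, (B i).Nonempty) ∧ ∀ i j, i ≠ j → B i ∩ B j = ∅} ×
        {x : ↥(TT k) → Bool // IsLabeling k ℓ x})) := by
  classical
  refine ⟨⟨CCoverAux.fwd n k ℓ, CCoverAux.bwd n k ℓ hk1, ?_, ?_⟩⟩
  · intro a
    apply Subtype.ext
    exact CCoverAux.mkA_regions_eq a.2.1
      (CCoverAux.tv_surj (CCoverAux.xA a.1) (CCoverAux.xA_labeling a.2.1 a.2.2).2)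
  · rintro ⟨⟨B, hB1, hB2⟩, ⟨x, hxa, hxc⟩⟩
    have hxeq : CCoverAux.xA (CCoverAux.mkA B (CCoverAux.tv x hxc)) = x :=
      CCoverAux.xA_mkA hB1 hB2 (CCoverAux.tv_injective x hxc)
        (CCoverAux.tv_true x hxc) (CCoverAux.tv_surj x hxc)
    refine Prod.ext ?_ ?_
    · apply Subtype.ext
      funext j
      show region (CCoverAux.mkA B (CCoverAux.tv x hxc))
        ((CCoverAux.tv (CCoverAux.xA (CCoverAux.mkA B (CCoverAux.tv x hxc))) _ j).1) = B j
      refine (congrArg (fun f => region (CCoverAux.mkA B (CCoverAux.tv x hxc)) (f j).1)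
        (CCoverAux.tv_congr hxeq hxc _)).trans ?_
      exact CCoverAux.region_mkA_eq hB2 (CCoverAux.tv_injective x hxc) j
    · exact Subtype.ext hxeq
end

section
/- Let n ≥ 1 and 2 ≤ k ≤ n. Then |C(n,k)| = ∑_{ℓ=ℓ₀(k)}^{min(2^k−2, n)} s̃ℤ(n,ℓ) · |F(k,ℓ)| (the identity holding in ℤ after casting cardinalities). -/
/-- Scaled integrated Stirling number: `ℓ! · s̃(n,ℓ)`. -/
def stZ (n ℓ : ℕ) : ℤ :=
  ∑ j ∈ Finset.range (ℓ + 1), (-1 : ℤ) ^ (ℓ - j) * (ℓ.choose j : ℤ) * ((j : ℤ) + 1) ^ n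

/-- `ℓ₀(k)`: the minimal cardinality of a subset `T ⊆ 𝕋(k)` such that for all
`i ≠ j` there is `t ∈ T` with `t i = c` and `t j = e`. -/
noncomputable def ell0 (k : ℕ) : ℕ :=
  sInf {m : ℕ | ∃ T : Finset (Fin k → Bool), T ⊆ TT k ∧
    (∀ i j : Fin k, i ≠ j → ∃ t ∈ T, t i = true ∧ t j = false) ∧ T.card = m}


open Finset

lemma card_pi_mem (n : ℕ) {β : Type*} [Fintype β] [DecidableEq β] (D : Finset β) :
    (univ.filter fun f : Fin n → β => ∀ p, f p ∈ D).card = D.card ^ n := by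
  have h : (univ.filter fun f : Fin n → β => ∀ p, f p ∈ D)
      = Fintype.piFinset (fun _ : Fin n => D) := by
    ext f; simp [Fintype.mem_piFinset]
  rw [h, Fintype.card_piFinset]
  simp

lemma count_surj (n : ℕ) {β : Type*} [Fintype β] [DecidableEq β] (b₀ : β) (S : Finset β)
    (hb : b₀ ∉ S) :
    ((univ.filter fun f : Fin n → β =>
        (∀ p, f p ∈ insert b₀ S) ∧ ∀ s ∈ S, ∃ p, f p = s).card : ℤ) = stZ n S.card := by
  classical
  have key : ((univ.filter fun f : Fin n → β =>
        (∀ p, f p ∈ insert b₀ S) ∧ ∀ s ∈ S, ∃ p, f p = s).card : ℤ)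
      = ∑ T ∈ S.powerset, (-1 : ℤ) ^ T.card * (((S.card + 1 - T.card : ℕ)) : ℤ) ^ n := by
    have h1 : (univ.filter fun f : Fin n → β =>
        (∀ p, f p ∈ insert b₀ S) ∧ ∀ s ∈ S, ∃ p, f p = s)
        = (univ.filter fun f : Fin n → β => ∀ p, f p ∈ insert b₀ S).filter
            (fun f => ∀ s ∈ S, ∃ p, f p = s) := by
      rw [filter_filter]
    rw [h1, card_filter]
    push_cast
    have h2 : ∀ f ∈ (univ.filter fun f : Fin n → β => ∀ p, f p ∈ insert b₀ S),
        (if ∀ s ∈ S, ∃ p, f p = s then (1 : ℤ) else 0)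
          = ∑ T ∈ S.powerset, if T ⊆ S.filter (fun s => ∀ p, f p ≠ s)
              then (-1 : ℤ) ^ T.card else 0 := by
      intro f _
      have hM : S.filter (fun s => ∀ p, f p ≠ s) ⊆ S := filter_subset _ _
      have hpow : S.powerset.filter (fun T => T ⊆ S.filter (fun s => ∀ p, f p ≠ s))
          = (S.filter (fun s => ∀ p, f p ≠ s)).powerset := by
        ext T
        simp only [mem_filter, mem_powerset]
        exact ⟨fun h => h.2, fun h => ⟨h.trans hM, h⟩⟩
      rw [← sum_filter, hpow, sum_powerset_neg_one_pow_card]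
      have : (S.filter (fun s => ∀ p, f p ≠ s) = ∅) ↔ (∀ s ∈ S, ∃ p, f p = s) := by
        simp only [filter_eq_empty_iff]
        push_neg
        tauto
      by_cases hP : ∀ s ∈ S, ∃ p, f p = s
      · rw [if_pos hP, if_pos (this.mpr hP)]
      · rw [if_neg hP, if_neg (fun h => hP (this.mp h))]
    rw [Finset.sum_congr rfl h2, Finset.sum_comm]
    refine Finset.sum_congr rfl fun T hT => ?_
    rw [mem_powerset] at hT
    have h3 : ∀ f : Fin n → β,
        (f ∈ univ.filter fun f : Fin n → β => ∀ p, f p ∈ insert b₀ S) →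
        ((T ⊆ S.filter (fun s => ∀ p, f p ≠ s)) ↔ (∀ p, f p ∉ T)) := by
      intro f _
      constructor
      · intro h p hpT
        have := h hpT
        rw [mem_filter] at this
        exact this.2 p rfl
      · intro h s hsT
        rw [mem_filter]
        exact ⟨hT hsT, fun p hp => h p (hp ▸ hsT)⟩
    calc ∑ f ∈ univ.filter fun f : Fin n → β => ∀ p, f p ∈ insert b₀ S,
          (if T ⊆ S.filter (fun s => ∀ p, f p ≠ s) then (-1 : ℤ) ^ T.card else 0)
        = ∑ f ∈ univ.filter fun f : Fin n → β => ∀ p, f p ∈ insert b₀ S,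
          (if (∀ p, f p ∉ T) then (-1 : ℤ) ^ T.card else 0) := by
          refine Finset.sum_congr rfl fun f hf => ?_
          rw [if_congr (h3 f hf) rfl rfl]
      _ = ∑ f ∈ (univ.filter fun f : Fin n → β => ∀ p, f p ∈ insert b₀ S).filter
            (fun f => ∀ p, f p ∉ T), (-1 : ℤ) ^ T.card := (sum_filter _ _).symm
      _ = (-1 : ℤ) ^ T.card * (((S.card + 1 - T.card : ℕ)) : ℤ) ^ n := by
          rw [sum_const]
          have h4 : (univ.filter fun f : Fin n → β => ∀ p, f p ∈ insert b₀ S).filter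
              (fun f => ∀ p, f p ∉ T) = univ.filter fun f : Fin n → β =>
                ∀ p, f p ∈ insert b₀ S \ T := by
            rw [filter_filter]
            refine filter_congr fun f _ => ?_
            simp only [mem_sdiff]
            exact forall_and.symm
          rw [h4, card_pi_mem]
          have h5 : (insert b₀ S \ T).card = S.card + 1 - T.card := by
            rw [card_sdiff_of_subset (hT.trans (subset_insert _ _)), card_insert_of_notMem hb]
          rw [h5, nsmul_eq_mul, mul_comm]
          push_cast
          ring
  rw [key]
  have h6 := Finset.sum_powerset_apply_card
    (f := fun m => (-1 : ℤ) ^ m * (((S.card + 1 - m : ℕ)) : ℤ) ^ n) (x := S)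
  rw [h6]
  rw [← Finset.sum_range_reflect]
  unfold stZ
  apply Finset.sum_congr rfl
  intro j hj
  clear key h6
  rw [mem_range, Nat.lt_succ_iff] at hj
  have e1 : S.card + 1 - 1 - j = S.card - j := by omega
  have e2 : S.card + 1 - (S.card - j) = j + 1 := by omega
  have e3 : S.card.choose (S.card - j) = S.card.choose j := Nat.choose_symm hj
  rw [e1, e2, e3, nsmul_eq_mul]
  push_cast
  ring

lemma stZ_eq_zero {n ℓ : ℕ} (h : n < ℓ) : stZ n ℓ = 0 := by
  classical
  have hb : (0 : Fin (ℓ+1)) ∉ (univ \ {0} : Finset (Fin (ℓ+1))) := by simp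
  have hcard : (univ \ {0} : Finset (Fin (ℓ+1))).card = ℓ := by
    rw [card_sdiff_of_subset (by simp)]; simp
  have hc := count_surj n (0 : Fin (ℓ+1)) (univ \ {0}) hb
  rw [hcard] at hc
  rw [← hc]
  norm_cast
  rw [Finset.card_eq_zero, Finset.eq_empty_iff_forall_notMem]
  intro f hf
  simp only [mem_filter] at hf
  obtain ⟨_, -, hsurj⟩ := hf
  have hex : ∀ s : {s : Fin (ℓ+1) // s ∈ (univ \ {0} : Finset (Fin (ℓ+1)))}, ∃ p, f p = s.1 :=
    fun s => hsurj s.1 s.2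
  choose g hg using hex
  have hinj : Function.Injective g := by
    intro a b hab
    apply Subtype.ext
    rw [← hg a, ← hg b, hab]
  have hle := Fintype.card_le_of_injective g hinj
  rw [Fintype.card_coe, hcard, Fintype.card_fin] at hle
  exact absurd hle (Nat.not_le.mpr h)

/-- Condition (a) of a labeling. -/
def condA (k : ℕ) (x : ↥(TT k) → Bool) : Prop :=
  ∀ i j : Fin k, i ≠ j → ∃ t : ↥(TT k), t.1 i = true ∧ t.1 j = false ∧ x t = true

/-- Covers encoded as point-type functions. -/
def Phi (n k : ℕ) : Finset (Fin n → Fin k → Bool) :=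
  univ.filter fun φ => (∀ p, ∃ i, φ p i = true) ∧
    ∀ i j : Fin k, i ≠ j → ∃ p, φ p i = true ∧ φ p j = false

/-- The labeling induced by a point-type function. -/
noncomputable def lab (n k : ℕ) (φ : Fin n → Fin k → Bool) : ↥(TT k) → Bool :=
  fun t => decide (∃ p, φ p = t.1)

/-- The support of a labeling, as a finset of index vectors. -/
def supp (k : ℕ) (x : ↥(TT k) → Bool) : Finset (Fin k → Bool) :=
  (univ.filter fun t => x t = true).image Subtype.val

/-- The support cardinality of a labeling. -/
def sc (k : ℕ) (x : ↥(TT k) → Bool) : ℕ :=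
  (univ.filter fun t : ↥(TT k) => x t = true).card

lemma supp_subset (k : ℕ) (x : ↥(TT k) → Bool) : supp k x ⊆ TT k := by
  intro t ht
  obtain ⟨t', _, rfl⟩ := mem_image.mp ht
  exact t'.2

lemma sc_eq (k : ℕ) (x : ↥(TT k) → Bool) : (supp k x).card = sc k x :=
  card_image_of_injective _ Subtype.val_injective

lemma one_not_mem_TT (k : ℕ) : (fun _ => true : Fin k → Bool) ∉ TT k := by
  intro h
  obtain ⟨i, hi⟩ := (mem_filter.mp h).2.2
  simp at hi

lemma mem_supp_iff {k : ℕ} {x : ↥(TT k) → Bool} {t : ↥(TT k)} :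
    t.1 ∈ supp k x ↔ x t = true := by
  constructor
  · intro h
    obtain ⟨t', ht', he⟩ := mem_image.mp h
    have : t' = t := Subtype.ext he
    rw [← this]
    exact (mem_filter.mp ht').2
  · intro h
    exact mem_image.mpr ⟨t, mem_filter.mpr ⟨mem_univ _, h⟩, rfl⟩

lemma fiber_eq (n k : ℕ) (hk : 0 < k) (x : ↥(TT k) → Bool) (hx : condA k x) :
    (Phi n k).filter (fun φ => lab n k φ = x)
      = univ.filter (fun φ : Fin n → Fin k → Bool =>
          (∀ p, φ p ∈ insert (fun _ => true) (supp k x)) ∧ ∀ s ∈ supp k x, ∃ p, φ p = s) := by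
  classical
  ext φ
  constructor
  · intro hφ
    rw [mem_filter] at hφ
    obtain ⟨hΦ, hlab⟩ := hφ
    obtain ⟨-, hcov, hpair⟩ := mem_filter.mp hΦ
    refine mem_filter.mpr ⟨mem_univ _, ?_, ?_⟩
    · intro p
      by_cases h1 : ∀ i, φ p i = true
      · have : φ p = (fun _ => true) := funext h1
        rw [this]; exact mem_insert_self _ _
      · push_neg at h1
        obtain ⟨i, hi⟩ := h1
        rw [ne_eq, Bool.not_eq_true] at hi
        have ht : φ p ∈ TT k := mem_filter.mpr ⟨mem_univ _, hcov p, ⟨i, hi⟩⟩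
        have hx1 : x ⟨φ p, ht⟩ = true := by
          rw [← hlab]
          simp only [lab, decide_eq_true_iff]
          exact ⟨p, rfl⟩
        exact mem_insert_of_mem (mem_supp_iff.mpr hx1)
    · intro s hs
      obtain ⟨t, ht, rfl⟩ := mem_image.mp hs
      have hxt : x t = true := (mem_filter.mp ht).2
      rw [← hlab] at hxt
      simpa only [lab, decide_eq_true_iff] using hxt
  · intro hφ
    obtain ⟨-, hmem, hsurj⟩ := mem_filter.mp hφ
    have hcov : ∀ p, ∃ i, φ p i = true := by
      intro p
      rcases mem_insert.mp (hmem p) with h | h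
      · exact ⟨⟨0, hk⟩, by rw [h]⟩
      · exact (mem_filter.mp (supp_subset k x h)).2.1
    refine mem_filter.mpr ⟨mem_filter.mpr ⟨mem_univ _, hcov, ?_⟩, ?_⟩
    · intro i j hij
      obtain ⟨t, hti, htj, hxt⟩ := hx i j hij
      obtain ⟨p, hp⟩ := hsurj _ (mem_supp_iff.mpr hxt)
      exact ⟨p, by rw [hp]; exact ⟨hti, htj⟩⟩
    · funext t
      by_cases hxt : x t = true
      · obtain ⟨p, hp⟩ := hsurj _ (mem_supp_iff.mpr hxt)
        rw [hxt]
        simp only [lab, decide_eq_true_iff]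
        exact ⟨p, hp⟩
      · rw [Bool.not_eq_true] at hxt
        rw [hxt]
        simp only [lab, decide_eq_false_iff_not]
        rintro ⟨p, hp⟩
        rcases mem_insert.mp (hmem p) with h | h
        · rw [hp] at h
          obtain ⟨i, hi⟩ := (mem_filter.mp t.2).2.2
          rw [h] at hi
          simp at hi
        · rw [hp] at h
          rw [mem_supp_iff] at h
          rw [hxt] at h
          simp at h

lemma card_TT {k : ℕ} (hk : 1 ≤ k) : (TT k).card = 2 ^ k - 2 := by
  classical
  have he : TT k = univ \ {fun _ => false, fun _ => true} := by
    ext t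
    rw [mem_sdiff]
    simp only [TT, mem_filter, mem_univ, true_and, mem_insert, mem_singleton]
    constructor
    · rintro ⟨⟨i, hi⟩, ⟨j, hj⟩⟩
      rintro (rfl | rfl)
      · simp at hi
      · simp at hj
    · intro h
      push_neg at h
      obtain ⟨h1, h2⟩ := h
      constructor
      · by_contra hc
        push_neg at hc
        exact h1 (funext fun i => by
          have := hc i
          rw [ne_eq, Bool.not_eq_true] at this
          exact this)
      · by_contra hc
        push_neg at hc
        exact h2 (funext fun i => by
          have := hc i
          rw [ne_eq, Bool.not_eq_false] at this
          exact this)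
  rw [he, card_sdiff_of_subset (subset_univ _), card_univ]
  have h1 : Fintype.card (Fin k → Bool) = 2 ^ k := by simp
  have h2 : ({fun _ => false, fun _ => true} : Finset (Fin k → Bool)).card = 2 := by
    rw [card_insert_of_notMem, card_singleton]
    rw [mem_singleton]
    intro h
    have := congrFun h ⟨0, hk⟩
    simp at this
  rw [h1, h2]

/-- `|C(n,k)| = ∑_{ℓ=ℓ₀(k)}^{min(2^k−2, n)} s̃ℤ(n,ℓ) · |F(k,ℓ)|` in `ℤ`. -/
theorem card_ccover_eq_sum_from_ell0 (n k : ℕ) (hn : 1 ≤ n) (hk : 2 ≤ k) (hkn : k ≤ n) :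
    (Nat.card {A : Fin k → Finset (Fin n) // IsCCover n k A} : ℤ) =
      ∑ ℓ ∈ Finset.Icc (ell0 k) (min (2 ^ k - 2) n),
        stZ n ℓ * (Nat.card {x : ↥(TT k) → Bool // IsLabeling k ℓ x} : ℤ) := by
  classical
  have hk0 : 0 < k := by omega
  -- Step A : the covers are counted by `Phi`.
  have hA : Nat.card {A : Fin k → Finset (Fin n) // IsCCover n k A} = (Phi n k).card := by
    rw [Nat.card_eq_fintype_card, Fintype.card_subtype]
    refine card_nbij' (fun A => fun p i => decide (p ∈ A i))
      (fun φ => fun i => univ.filter fun p => φ p i = true) ?_ ?_ ?_ ?_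
    · intro A hA
      obtain ⟨-, hcov, hpair⟩ := mem_filter.mp hA
      refine mem_filter.mpr ⟨mem_univ _, ?_, ?_⟩
      · intro p
        have hp : p ∈ Finset.univ.biUnion A := hcov ▸ mem_univ p
        obtain ⟨i, -, hi⟩ := mem_biUnion.mp hp
        exact ⟨i, by simp [hi]⟩
      · intro i j hij
        obtain ⟨p, hp⟩ := hpair i j hij
        rw [mem_sdiff] at hp
        exact ⟨p, by simp [hp.1], by simp [hp.2]⟩
    · intro φ hφ
      obtain ⟨-, hcov, hpair⟩ := mem_filter.mp hφ
      refine mem_filter.mpr ⟨mem_univ _, ?_, ?_⟩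
      · apply eq_univ_iff_forall.mpr
        intro p
        obtain ⟨i, hi⟩ := hcov p
        exact mem_biUnion.mpr ⟨i, mem_univ _, mem_filter.mpr ⟨mem_univ _, hi⟩⟩
      · intro i j hij
        obtain ⟨p, hpi, hpj⟩ := hpair i j hij
        refine ⟨p, mem_sdiff.mpr ⟨mem_filter.mpr ⟨mem_univ _, hpi⟩, ?_⟩⟩
        intro hc
        rw [(mem_filter.mp hc).2] at hpj
        simp at hpj
    · intro A _
      funext i
      ext p
      simp
    · intro φ _
      funext p i
      simp
  rw [hA]
  -- the labeling of a cover satisfies condition (a)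
  have hmapsto : ∀ φ ∈ Phi n k, lab n k φ ∈ univ.filter (condA k) := by
    intro φ hφ
    obtain ⟨-, hcov, hpair⟩ := mem_filter.mp hφ
    refine mem_filter.mpr ⟨mem_univ _, ?_⟩
    intro i j hij
    obtain ⟨p, hpi, hpj⟩ := hpair i j hij
    have ht : φ p ∈ TT k := mem_filter.mpr ⟨mem_univ _, ⟨i, hpi⟩, ⟨j, hpj⟩⟩
    refine ⟨⟨φ p, ht⟩, hpi, hpj, ?_⟩
    simp only [lab, decide_eq_true_iff]
    exact ⟨p, rfl⟩
  -- Step B : count fiberwise over labelings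
  have hstep1 : ((Phi n k).card : ℤ)
      = ∑ x ∈ univ.filter (condA k), stZ n (sc k x) := by
    rw [card_eq_sum_card_fiberwise hmapsto]
    push_cast
    refine Finset.sum_congr rfl fun x hxX => ?_
    have hx : condA k x := (mem_filter.mp hxX).2
    rw [fiber_eq n k hk0 x hx, ← sc_eq]
    exact count_surj n _ (supp k x) (fun h => one_not_mem_TT k (supp_subset k x h))
  -- Step C : group by support cardinality
  have hmaps2 : ∀ x ∈ univ.filter (condA k), sc k x ∈ Icc (ell0 k) (2 ^ k - 2) := by
    intro x hxX
    have hx : condA k x := (mem_filter.mp hxX).2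
    rw [mem_Icc]
    constructor
    · apply Nat.sInf_le
      refine ⟨supp k x, supp_subset k x, ?_, sc_eq k x⟩
      intro i j hij
      obtain ⟨t, hti, htj, hxt⟩ := hx i j hij
      exact ⟨t.1, mem_supp_iff.mpr hxt, hti, htj⟩
    · rw [← sc_eq]
      calc (supp k x).card ≤ (TT k).card := card_le_card (supp_subset k x)
        _ = 2 ^ k - 2 := card_TT (by omega)
  have hstep2 : ∑ x ∈ univ.filter (condA k), stZ n (sc k x)
      = ∑ ℓ ∈ Icc (ell0 k) (2 ^ k - 2), stZ n ℓ *
          (((univ.filter (condA k)).filter (fun x => sc k x = ℓ)).card : ℤ) := by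
    rw [← Finset.sum_fiberwise_of_maps_to hmaps2 (fun x => stZ n (sc k x))]
    refine Finset.sum_congr rfl fun ℓ _ => ?_
    have hc : ∀ x ∈ (univ.filter (condA k)).filter (fun x => sc k x = ℓ),
        stZ n (sc k x) = stZ n ℓ := fun x hx => by rw [(mem_filter.mp hx).2]
    rw [Finset.sum_congr rfl hc, sum_const, nsmul_eq_mul, mul_comm]
  -- labeling cardinalities
  have hlabcard : ∀ ℓ : ℕ, Nat.card {x : ↥(TT k) → Bool // IsLabeling k ℓ x}
      = ((univ.filter (condA k)).filter (fun x => sc k x = ℓ)).card := by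
    intro ℓ
    rw [Nat.card_eq_fintype_card, Fintype.card_subtype]
    congr 1
    ext x
    simp only [mem_filter, mem_univ, true_and]
    exact Iff.rfl
  -- final bookkeeping : restrict the interval
  have hsub : Icc (ell0 k) (min (2 ^ k - 2) n) ⊆ Icc (ell0 k) (2 ^ k - 2) :=
    Icc_subset_Icc_right (min_le_left _ _)
  have hzero : ∀ ℓ ∈ Icc (ell0 k) (2 ^ k - 2),
      ℓ ∉ Icc (ell0 k) (min (2 ^ k - 2) n) →
      stZ n ℓ * (((univ.filter (condA k)).filter (fun x => sc k x = ℓ)).card : ℤ) = 0 := by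
    intro ℓ h1 h2
    rw [mem_Icc] at h1
    have hn' : n < ℓ := by
      rcases Nat.lt_or_ge n ℓ with h | h
      · exact h
      · exact absurd (mem_Icc.mpr ⟨h1.1, le_min h1.2 h⟩) h2
    rw [stZ_eq_zero hn', zero_mul]
  calc ((Phi n k).card : ℤ)
      = ∑ ℓ ∈ Icc (ell0 k) (2 ^ k - 2), stZ n ℓ *
          (((univ.filter (condA k)).filter (fun x => sc k x = ℓ)).card : ℤ) :=
        hstep1.trans hstep2
    _ = ∑ ℓ ∈ Icc (ell0 k) (min (2 ^ k - 2) n), stZ n ℓ *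
          (((univ.filter (condA k)).filter (fun x => sc k x = ℓ)).card : ℤ) :=
        (Finset.sum_subset hsub hzero).symm
    _ = ∑ ℓ ∈ Finset.Icc (ell0 k) (min (2 ^ k - 2) n),
          stZ n ℓ * (Nat.card {x : ↥(TT k) → Bool // IsLabeling k ℓ x} : ℤ) := by
        refine Finset.sum_congr rfl fun ℓ _ => ?_
        rw [hlabcard ℓ]
end
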